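/- Let 0 < β_1 < 1, 0 < β_2 < 1 with μ := β_1/√β_2 < 1. Fix i and reals d_1,…,d_T (not all components zero at each step in the sense that ∑_{j=1}^t β_2^{t-j} d_j² > 0 whenever needed). Define m_t = ∑_{j=1}^t (1-β_{1j}) (∏_{k=j+1}^t β_{1k}) d_j with 0 < β_{1j} ≤ β_1, and v_t = (1-β_2) ∑_{j=1}^t β_2^{t-j} d_j². Then (∑_{j=1}^t (∏_{k=j+1}^t β_{1k}) d_j)² / √(v_t/(1-β_2)) ≤ (1/(1-β_1)) ∑_{j=1}^t β_1^{t-j} d_j² / √(β_2^{t-j} d_j²) = (1/(1-β_1)) ∑_{j=1}^t μ^{t-j} |d_j|. -/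

import Mathlib

theorem stmt_6 (t : ℕ) (ht : 1 ≤ t) (β₁ β₂ : ℝ)
    (hβ₁0 : 0 < β₁) (hβ₁1 : β₁ < 1) (hβ₂0 : 0 < β₂) (hβ₂1 : β₂ < 1)
    (μ : ℝ) (hμ : μ = β₁ / Real.sqrt β₂) (hμ1 : μ < 1)
    (β₁j : ℕ → ℝ) (hβ₁jpos : ∀ j, 0 < β₁j j) (hβ₁jle : ∀ j, β₁j j ≤ β₁)
    (d : ℕ → ℝ) (hdne : ∀ j, 1 ≤ j → j ≤ t → d j ≠ 0) :
    (∑ j ∈ Finset.Icc 1 t, (∏ k ∈ Finset.Icc (j + 1) t, β₁j k) * d j) ^ 2 /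
        Real.sqrt (∑ j ∈ Finset.Icc 1 t, β₂ ^ (t - j) * (d j) ^ 2) ≤
      (1 / (1 - β₁)) *
        ∑ j ∈ Finset.Icc 1 t, β₁ ^ (t - j) * (d j) ^ 2 /
          Real.sqrt (β₂ ^ (t - j) * (d j) ^ 2) ∧
    (1 / (1 - β₁)) *
        ∑ j ∈ Finset.Icc 1 t, β₁ ^ (t - j) * (d j) ^ 2 /
          Real.sqrt (β₂ ^ (t - j) * (d j) ^ 2) =
      (1 / (1 - β₁)) * ∑ j ∈ Finset.Icc 1 t, μ ^ (t - j) * |d j| := by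
  have hs2pos : 0 < Real.sqrt β₂ := Real.sqrt_pos.mpr hβ₂0
  have hβ₁1' : (0:ℝ) < 1 - β₁ := by linarith
  -- sqrt of β₂ ^ n
  have hsqpow : ∀ n : ℕ, Real.sqrt (β₂ ^ n) = Real.sqrt β₂ ^ n := by
    intro n
    have : β₂ ^ n = (Real.sqrt β₂ ^ n) ^ 2 := by
      rw [← pow_mul, mul_comm, pow_mul, Real.sq_sqrt hβ₂0.le]
    rw [this, Real.sqrt_sq (pow_nonneg hs2pos.le n)]
  -- sqrt of each term
  have hsqterm : ∀ j, Real.sqrt (β₂ ^ (t - j) * d j ^ 2)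
      = Real.sqrt β₂ ^ (t - j) * |d j| := by
    intro j
    rw [Real.sqrt_mul (pow_nonneg hβ₂0.le _), hsqpow, Real.sqrt_sq_eq_abs]
  -- per-term positivity
  have hterm : ∀ j ∈ Finset.Icc 1 t, 0 < β₂ ^ (t - j) * d j ^ 2 := by
    intro j hj
    rw [Finset.mem_Icc] at hj
    have hd := hdne j hj.1 hj.2
    positivity
  set S := Real.sqrt (∑ j ∈ Finset.Icc 1 t, β₂ ^ (t - j) * (d j) ^ 2) with hS
  have hsumpos : 0 < ∑ j ∈ Finset.Icc 1 t, β₂ ^ (t - j) * (d j) ^ 2 := by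
    apply Finset.sum_pos hterm
    exact ⟨1, Finset.mem_Icc.mpr ⟨le_refl 1, ht⟩⟩
  have hSpos : 0 < S := Real.sqrt_pos.mpr hsumpos
  have hSge : ∀ j ∈ Finset.Icc 1 t, Real.sqrt (β₂ ^ (t - j) * d j ^ 2) ≤ S := by
    intro j hj
    apply Real.sqrt_le_sqrt
    exact Finset.single_le_sum (fun i hi => (hterm i hi).le) hj
  -- product bound
  have hbpos : ∀ j : ℕ, 0 < ∏ k ∈ Finset.Icc (j + 1) t, β₁j k :=
    fun j => Finset.prod_pos (fun k _ => hβ₁jpos k)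
  have hble : ∀ j ∈ Finset.Icc 1 t, (∏ k ∈ Finset.Icc (j + 1) t, β₁j k) ≤ β₁ ^ (t - j) := by
    intro j hj
    calc (∏ k ∈ Finset.Icc (j + 1) t, β₁j k) ≤ ∏ k ∈ Finset.Icc (j + 1) t, β₁ :=
          Finset.prod_le_prod (fun k _ => (hβ₁jpos k).le) (fun k _ => hβ₁jle k)
      _ = β₁ ^ (t - j) := by
          rw [Finset.prod_const, Nat.card_Icc]
          congr 1
          omega
  -- Cauchy-Schwarz
  set b : ℕ → ℝ := fun j => ∏ k ∈ Finset.Icc (j + 1) t, β₁j k with hb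
  have hCS : (∑ j ∈ Finset.Icc 1 t, b j * d j) ^ 2 ≤
      (∑ j ∈ Finset.Icc 1 t, b j) * ∑ j ∈ Finset.Icc 1 t, b j * d j ^ 2 := by
    have := Finset.sum_mul_sq_le_sq_mul_sq (Finset.Icc 1 t)
      (fun j => Real.sqrt (b j)) (fun j => Real.sqrt (b j) * d j)
    have h1 : ∀ j, Real.sqrt (b j) * (Real.sqrt (b j) * d j) = b j * d j := by
      intro j
      rw [← mul_assoc, Real.mul_self_sqrt (hbpos j).le]
    have h2 : ∀ j, Real.sqrt (b j) ^ 2 = b j := fun j => Real.sq_sqrt (hbpos j).le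
    have h3 : ∀ j, (Real.sqrt (b j) * d j) ^ 2 = b j * d j ^ 2 := by
      intro j
      rw [mul_pow, h2]
    simp only [h1, h2, h3] at this
    exact this
  -- geometric bound on ∑ b
  have hgeom : (∑ j ∈ Finset.Icc 1 t, b j) ≤ 1 / (1 - β₁) := by
    calc (∑ j ∈ Finset.Icc 1 t, b j) ≤ ∑ j ∈ Finset.Icc 1 t, β₁ ^ (t - j) :=
          Finset.sum_le_sum hble
      _ = ∑ k ∈ Finset.range t, β₁ ^ k := by
          apply Finset.sum_nbij' (fun j => t - j) (fun k => t - k)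
          · intro j hj; rw [Finset.mem_Icc] at hj; rw [Finset.mem_range]; omega
          · intro k hk; rw [Finset.mem_range] at hk; rw [Finset.mem_Icc]; omega
          · intro j hj; rw [Finset.mem_Icc] at hj; omega
          · intro k hk; rw [Finset.mem_range] at hk; omega
          · intro j _; rfl
      _ = (1 - β₁ ^ t) / (1 - β₁) := by
          rw [geom_sum_eq hβ₁1.ne t]
          rw [div_eq_div_iff (by linarith) (by linarith)]
          ring
      _ ≤ 1 / (1 - β₁) := by
          apply div_le_div_of_nonneg_right ?_ hβ₁1'.le |>.trans_eq rfl
          have : 0 ≤ β₁ ^ t := pow_nonneg hβ₁0.le t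
          linarith
  have hsum2 : (∑ j ∈ Finset.Icc 1 t, b j * d j ^ 2) ≤
      ∑ j ∈ Finset.Icc 1 t, β₁ ^ (t - j) * d j ^ 2 :=
    Finset.sum_le_sum (fun j hj => mul_le_mul_of_nonneg_right (hble j hj) (sq_nonneg _))
  have hsum2nonneg : 0 ≤ ∑ j ∈ Finset.Icc 1 t, b j * d j ^ 2 :=
    Finset.sum_nonneg (fun j _ => mul_nonneg (hbpos j).le (sq_nonneg _))
  have hA2 : (∑ j ∈ Finset.Icc 1 t, b j * d j) ^ 2 ≤
      (1 / (1 - β₁)) * ∑ j ∈ Finset.Icc 1 t, β₁ ^ (t - j) * d j ^ 2 := by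
    calc (∑ j ∈ Finset.Icc 1 t, b j * d j) ^ 2
        ≤ (∑ j ∈ Finset.Icc 1 t, b j) * ∑ j ∈ Finset.Icc 1 t, b j * d j ^ 2 := hCS
      _ ≤ (1 / (1 - β₁)) * ∑ j ∈ Finset.Icc 1 t, β₁ ^ (t - j) * d j ^ 2 := by
          apply mul_le_mul hgeom hsum2 hsum2nonneg (by positivity)
  constructor
  · calc (∑ j ∈ Finset.Icc 1 t, b j * d j) ^ 2 / S
        ≤ ((1 / (1 - β₁)) * ∑ j ∈ Finset.Icc 1 t, β₁ ^ (t - j) * d j ^ 2) / S :=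
          div_le_div_of_nonneg_right hA2 hSpos.le |>.trans_eq rfl
      _ = (1 / (1 - β₁)) * ∑ j ∈ Finset.Icc 1 t, β₁ ^ (t - j) * d j ^ 2 / S := by
          rw [mul_div_assoc, Finset.sum_div]
      _ ≤ (1 / (1 - β₁)) * ∑ j ∈ Finset.Icc 1 t, β₁ ^ (t - j) * d j ^ 2 /
            Real.sqrt (β₂ ^ (t - j) * d j ^ 2) := by
          apply mul_le_mul_of_nonneg_left ?_ (by positivity)
          apply Finset.sum_le_sum
          intro j hj
          apply div_le_div_of_nonneg_left (by positivity)
            (Real.sqrt_pos.mpr (hterm j hj)) (hSge j hj)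
  · congr 1
    apply Finset.sum_congr rfl
    intro j hj
    rw [Finset.mem_Icc] at hj
    have hd := hdne j hj.1 hj.2
    have habs : |d j| ≠ 0 := abs_ne_zero.mpr hd
    rw [hsqterm j, hμ, div_pow, ← sq_abs (d j)]
    field_simp
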